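/- arXiv:2303.10081 — 3 statements merged into one kernel-verified Lean document; each statement's English description precedes it below -/
import Mathlib

section
/- Let W be a real symmetric positive definite m × m matrix, and let u ∈ ℝ^m, ζ ∈ ℝ, c ∈ ℝ^m satisfy the KKT conditions for maximizing ⟨c, u⟩ over the ellipsoid uᵀ W u ≤ 1: namely ζ ≥ 0, c = 2 ζ W u (stationarity), ζ (uᵀ W u − 1) = 0 (complementarity), and uᵀ W u ≤ 1 (primal feasibility). Then ζ² ≤ ‖c‖² / (4 λ_min(W)), where λ_min(W) is the smallest eigenvalue of W and ‖·‖ is the Euclidean norm. -/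
open Matrix

lemma rayleigh_lower_aux (m : ℕ) (W : Matrix (Fin m) (Fin m) ℝ) (hW : W.IsHermitian)
    (u : Fin m → ℝ) : (⨅ i, hW.eigenvalues i) * (u ⬝ᵥ u) ≤ u ⬝ᵥ (W *ᵥ u) := by
  rcases Nat.eq_zero_or_pos m with hm | hm
  · subst hm; simp [dotProduct]
  have : Nonempty (Fin m) := Fin.pos_iff_nonempty.mp hm
  set U : Matrix (Fin m) (Fin m) ℝ := (hW.eigenvectorUnitary : Matrix (Fin m) (Fin m) ℝ)
  set v : Fin m → ℝ := star U *ᵥ u with hv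
  have hUU : U * star U = 1 := (Matrix.mem_unitaryGroup_iff).mp hW.eigenvectorUnitary.2
  have huu : u ⬝ᵥ u = v ⬝ᵥ v := by
    have : u ⬝ᵥ u = u ⬝ᵥ ((U * star U) *ᵥ u) := by rw [hUU, one_mulVec]
    rw [this, ← mulVec_mulVec, dotProduct_mulVec u, hv]
    congr 1
    ext i
    simp [vecMul, mulVec, dotProduct, Matrix.star_apply, mul_comm]
  have hWu : u ⬝ᵥ (W *ᵥ u) = ∑ i, hW.eigenvalues i * v i ^ 2 := by
    conv_lhs => rw [hW.spectral_theorem, Unitary.conjStarAlgAut_apply]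
    rw [← mulVec_mulVec, ← mulVec_mulVec, dotProduct_mulVec u, hv]
    have hvec : u ᵥ* U = v := by
      ext i
      simp only [hv, vecMul, mulVec, dotProduct, Matrix.star_apply, star_trivial]
      exact Finset.sum_congr rfl fun x _ => mul_comm _ _
    rw [hvec]
    simp [mulVec_diagonal, dotProduct, sq, mul_comm, mul_assoc, mul_left_comm]
    rfl
  rw [huu, hWu, dotProduct, Finset.mul_sum]
  apply Finset.sum_le_sum
  intro i _
  have h1 : (⨅ j, hW.eigenvalues j) ≤ hW.eigenvalues i :=
    ciInf_le (Set.Finite.bddBelow (Set.finite_range _)) i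
  nlinarith [sq_nonneg (v i)]

/-- Ellipsoid case of Proposition 1: boundedness of the KKT dual variable for
maximizing `⟨c, u⟩` over the ellipsoid `uᵀ W u ≤ 1` with `W ≻ 0`. -/
theorem stmt_2 (m : ℕ) (W : Matrix (Fin m) (Fin m) ℝ) (hW : W.PosDef)
    (u c : Fin m → ℝ) (ζ : ℝ)
    (hdual : 0 ≤ ζ)
    (hstat : c = (2 * ζ) • (W *ᵥ u))
    (hcomp : ζ * (u ⬝ᵥ (W *ᵥ u) - 1) = 0)
    (hprimal : u ⬝ᵥ (W *ᵥ u) ≤ 1) :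
    ζ ^ 2 ≤ (∑ i, c i ^ 2) / (4 * ⨅ i, hW.1.eigenvalues i) := by
  set lam := ⨅ i, hW.1.eigenvalues i with hlam
  have hlam0 : 0 ≤ lam :=
    Real.iInf_nonneg fun i => (hW.posSemidef.eigenvalues_nonneg i)
  rcases eq_or_lt_of_le hdual with hz | hz
  · rw [← hz, zero_pow (by norm_num : 2 ≠ 0)]
    exact div_nonneg (Finset.sum_nonneg fun i _ => sq_nonneg _)
      (mul_nonneg (by norm_num) hlam0)
  -- ζ > 0
  have heq : u ⬝ᵥ (W *ᵥ u) = 1 := by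
    rcases mul_eq_zero.mp hcomp with h | h
    · exact absurd h.symm hz.ne
    · linarith [sub_eq_zero.mp h]
  have hne : Nonempty (Fin m) := by
    rcases Nat.eq_zero_or_pos m with hm | hm
    · exfalso; subst hm; simp [dotProduct] at heq
    · exact Fin.pos_iff_nonempty.mp hm
  have hlampos : 0 < lam := by
    obtain ⟨i0, hi0⟩ := Finite.exists_min hW.1.eigenvalues
    exact lt_of_lt_of_le (hW.eigenvalues_pos i0) (le_ciInf hi0)
  set v : Fin m → ℝ := W *ᵥ u with hvdef
  have hsum_c : ∑ i, c i ^ 2 = 4 * ζ ^ 2 * ∑ i, v i ^ 2 := by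
    rw [hstat, Finset.mul_sum]
    refine Finset.sum_congr rfl fun i _ => ?_
    simp only [Pi.smul_apply, smul_eq_mul]
    ring
  have hCS : (u ⬝ᵥ v) ^ 2 ≤ (∑ i, u i ^ 2) * ∑ i, v i ^ 2 :=
    Finset.sum_mul_sq_le_sq_mul_sq Finset.univ u v
  have hray : lam * (∑ i, u i ^ 2) ≤ 1 := by
    have := rayleigh_lower_aux m W hW.1 u
    rw [heq] at this
    simpa [dotProduct, sq] using this
  rw [heq, one_pow] at hCS
  have hNnn : 0 ≤ ∑ i, v i ^ 2 := Finset.sum_nonneg fun i _ => sq_nonneg _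
  have hkey : lam ≤ ∑ i, v i ^ 2 := by
    nlinarith [mul_le_mul_of_nonneg_left hCS hlam0,
      mul_le_mul_of_nonneg_right hray hNnn]
  rw [hsum_c, le_div_iff₀ (by positivity : (0:ℝ) < 4 * lam)]
  nlinarith [sq_nonneg ζ]
end

section
/- Let θ₁, θ₂, θ₃ be real numbers with θ₁ > 0, θ₂ > 0 and θ₃² < θ₁ θ₂, and let A be the 2 × 2 symmetric matrix with diagonal entries θ₁, θ₂ and off-diagonal entries θ₃. If x = (x₁, x₂) ∈ ℝ² satisfies xᵀ A x = 1 and g = (0, x₁) ∈ ℝ², then (2 ⟨A x, g⟩)² ≤ 4 (θ₁ + θ₂)² / (θ₁ θ₂ − θ₃²). -/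
open Matrix

/-- Bound on the objective gradient `L_g b(x,θ) = −2 xᵀ A g` of the elliptical
robust CBF candidate with control vector field `g(x) = (0, x₁)ᵀ`. -/
theorem stmt_11 (θ₁ θ₂ θ₃ : ℝ) (h₁ : 0 < θ₁) (h₂ : 0 < θ₂) (h₃ : θ₃ ^ 2 < θ₁ * θ₂)
    (x : Fin 2 → ℝ) (hx : x ⬝ᵥ ((!![θ₁, θ₃; θ₃, θ₂]) *ᵥ x) = 1)
    (g : Fin 2 → ℝ) (hg : g = ![0, x 0]) :
    (2 * (((!![θ₁, θ₃; θ₃, θ₂]) *ᵥ x) ⬝ᵥ g)) ^ 2 ≤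
      4 * (θ₁ + θ₂) ^ 2 / (θ₁ * θ₂ - θ₃ ^ 2) := by
  subst hg
  simp [Matrix.mulVec, dotProduct, Fin.sum_univ_two] at hx ⊢
  set a := x 0
  set b := x 1
  have hdet : 0 < θ₁ * θ₂ - θ₃ ^ 2 := by linarith
  rw [le_div_iff₀ hdet]
  -- key facts
  have key1 : (θ₃ * a + θ₂ * b) ^ 2 ≤ θ₂ := by
    nlinarith [sq_nonneg a, sq_nonneg (θ₃ * a + θ₂ * b)]
  have key2 : (θ₁ * θ₂ - θ₃ ^ 2) * a ^ 2 ≤ θ₂ := by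
    nlinarith [sq_nonneg (θ₃ * a + θ₂ * b)]
  nlinarith [sq_nonneg a, sq_nonneg (θ₃ * a + θ₂ * b), mul_nonneg (sq_nonneg a) (sq_nonneg (θ₃ * a + θ₂ * b)), mul_le_mul key2 key1 (sq_nonneg _) h₂.le, sq_nonneg (θ₁ + θ₂), h₁.le, h₂.le]
end

section
/- Let u_max = 5 and θ ≥ 1. Then for every x = (x₁, x₂) ∈ ℝ² with x₁² + x₂² = θ, it holds that −x₂²(1 − x₂²) + 2 · 5 · |x₁ x₂| ≥ 0. -/
/-- Validity of the circular CBF candidate for the clean Van der Pol oscillator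
with `u_max = 5` and `θ ≥ 1`. -/
theorem stmt_14 (θ : ℝ) (hθ : 1 ≤ θ) (x₁ x₂ : ℝ) (hx : x₁ ^ 2 + x₂ ^ 2 = θ) :
    -x₂ ^ 2 * (1 - x₂ ^ 2) + 2 * 5 * |x₁ * x₂| ≥ 0 := by
  have ha : |x₁ * x₂| ≥ 0 := abs_nonneg _
  have ha2 : |x₁ * x₂| ^ 2 = x₁ ^ 2 * x₂ ^ 2 := by
    rw [sq_abs]; ring
  nlinarith [sq_nonneg (x₂ ^ 2 - 1), sq_nonneg x₂, sq_nonneg x₁, sq_nonneg (|x₁ * x₂| - x₂ ^ 2 * (1 - x₂ ^ 2)), sq_nonneg (x₂ ^ 2 * (1 - x₂ ^ 2)), mul_nonneg ha (sq_nonneg x₂)]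
end
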